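/- There exist universal constants C, c > 0 with the following property. Let n, N be positive integers, let M, r > 0, let ρ ∈ (0, min(1/2, c√n/(rM))], let θ₁, …, θ_N ∈ S^{n−1} be fixed, and let ξ ∈ S^{n−1}. Then for every t ∈ ℝ, F(ξ, t) ≤ 𝔼_η F(η^ξ, t) + C/M, where the expectation is taken over the random rounding η^ξ. -/

import Mathlib

open MeasureTheory Metric Set
open scoped RealInnerProductSpace

/-- `φ(r) = e^{−r²/2}`. -/
noncomputable def gphi (r : ℝ) : ℝ := Real.exp (-r ^ 2 / 2)

/-- `F(η,t) = (1/N) ∑_{k=1}^N φ(r⟨η,θ_k⟩ + t)`. -/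
noncomputable def Ffun {n N : ℕ} (r t : ℝ)
    (θ : Fin N → sphere (0 : EuclideanSpace ℝ (Fin n)) 1)
    (η : EuclideanSpace ℝ (Fin n)) : ℝ :=
  (1 / (N : ℝ)) * ∑ k : Fin N, gphi (r * ⟪η, (θ k : EuclideanSpace ℝ (Fin n))⟫ + t)

/-- The distribution of the random rounding of a real number `x` to the grid `sℤ`:
writing `x = s(k+p)` with `k = ⌊x/s⌋` and `p ∈ [0,1)`, it takes the value `sk` with
probability `1-p` and `s(k+1)` with probability `p`. -/
noncomputable def roundCoord (s x : ℝ) : Measure ℝ :=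
  ENNReal.ofReal (1 - Int.fract (x / s)) • Measure.dirac (s * ⌊x / s⌋) +
    ENNReal.ofReal (Int.fract (x / s)) • Measure.dirac (s * (⌊x / s⌋ + 1))

/-- The law of the random rounding `η^ξ` of `ξ ∈ ℝⁿ` to the lattice `(ρ/√n)ℤⁿ`,
with independent coordinates rounded as in `roundCoord`. -/
noncomputable def roundingLaw (n : ℕ) (ρ : ℝ) (ξ : EuclideanSpace ℝ (Fin n)) :
    Measure (EuclideanSpace ℝ (Fin n)) :=
  Measure.map (MeasurableEquiv.toLp 2 (Fin n → ℝ))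
    (Measure.pi fun i => roundCoord (ρ / Real.sqrt n) (ξ i))

/-! ### Elementary properties of `gphi` -/

lemma gphi_pos (x : ℝ) : 0 < gphi x := Real.exp_pos _

lemma gphi_le_one (x : ℝ) : gphi x ≤ 1 := by
  rw [gphi, ← Real.exp_zero]
  exact Real.exp_le_exp.2 (by nlinarith [sq_nonneg x])

lemma gphi_deriv (x : ℝ) : HasDerivAt gphi (-x * gphi x) x := by
  have h1 : HasDerivAt (fun x : ℝ => -x ^ 2 / 2) (-x) x := by
    have := ((hasDerivAt_pow 2 x).neg).div_const 2
    simpa using this.congr_deriv (by ring)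
  have e : gphi = fun x => Real.exp (-x ^ 2 / 2) := rfl
  rw [e]
  simpa [gphi, mul_comm] using h1.exp

/-- Second-order Taylor lower bound for `gphi`, using `|gphi''| ≤ 1`. -/
lemma gphi_taylor (a d : ℝ) : gphi a - a * gphi a * d - d^2/2 ≤ gphi (a + d) := by
  set h : ℝ → ℝ := fun d => gphi (a + d) - gphi a + a * gphi a * d + d^2/2 with hh
  set g : ℝ → ℝ := fun x => -(a+x) * gphi (a+x) + (a * gphi a + x) with hg
  have hd : ∀ x : ℝ, HasDerivAt h (g x) x := by
    intro x
    have h1 : HasDerivAt (fun d : ℝ => gphi (a + d)) (-(a+x) * gphi (a+x)) x := by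
      have := (gphi_deriv (a+x)).comp x ((hasDerivAt_id x).const_add a)
      simpa [Function.comp_def] using this
    have h2 : HasDerivAt (fun d : ℝ => a * gphi a * d) (a * gphi a) x := by
      simpa using (hasDerivAt_id x).const_mul (a * gphi a)
    have h3 : HasDerivAt (fun d : ℝ => d^2/2) x x := by
      simpa using ((hasDerivAt_pow 2 x).div_const 2).congr_deriv (by ring)
    have := ((h1.sub_const (gphi a)).add h2).add h3
    simp only [hg]
    exact this.congr_deriv (by ring)
  have hgd : ∀ x : ℝ, HasDerivAt g (((a+x)^2 - 1) * gphi (a+x) + 1) x := by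
    intro x
    have hF : ∀ y : ℝ, HasDerivAt (fun y : ℝ => -y * gphi y) ((y^2 - 1) * gphi y) y := by
      intro y
      have := ((hasDerivAt_id y).neg.mul (gphi_deriv y))
      exact this.congr_deriv (by simp only [Pi.neg_apply, id]; ring)
    have h1 := (hF (a+x)).comp x ((hasDerivAt_id x).const_add a)
    have h2 : HasDerivAt (fun x : ℝ => a * gphi a + x) 1 x := by
      simpa using (hasDerivAt_id x).const_add (a * gphi a)
    have := h1.add h2
    simp only [hg]
    exact this.congr_deriv (by ring)
  have hgnn : ∀ x : ℝ, 0 ≤ ((a+x)^2 - 1) * gphi (a+x) + 1 := by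
    intro x
    have h0 := gphi_pos (a+x)
    have h1 := gphi_le_one (a+x)
    nlinarith [mul_nonneg (sq_nonneg (a+x)) h0.le]
  have hgmono : Monotone g := by
    have hdiff : Differentiable ℝ g := fun x => (hgd x).differentiableAt
    refine monotone_of_deriv_nonneg hdiff (fun x => ?_)
    rw [(hgd x).deriv]; exact hgnn x
  have hg0 : g 0 = 0 := by simp [hg]
  have hcont : Continuous h := by
    have : Differentiable ℝ h := fun x => (hd x).differentiableAt
    exact this.continuous
  have key : 0 ≤ h d := by
    have h0 : h 0 = 0 := by simp [hh]
    rcases le_total 0 d with hle | hle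
    · have hmono : MonotoneOn h (Ici (0:ℝ)) := by
        refine monotoneOn_of_deriv_nonneg (convex_Ici 0) hcont.continuousOn
          (fun x _ => (hd x).differentiableAt.differentiableWithinAt) (fun x hx => ?_)
        rw [(hd x).deriv]
        rw [interior_Ici] at hx
        have := hgmono (le_of_lt hx)
        rw [hg0] at this; exact this
      have := hmono (self_mem_Ici) (mem_Ici.2 hle) hle
      rwa [h0] at this
    · have hanti : AntitoneOn h (Iic (0:ℝ)) := by
        refine antitoneOn_of_deriv_nonpos (convex_Iic 0) hcont.continuousOn
          (fun x _ => (hd x).differentiableAt.differentiableWithinAt) (fun x hx => ?_)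
        rw [(hd x).deriv]
        rw [interior_Iic] at hx
        have := hgmono (le_of_lt hx)
        rw [hg0] at this; exact this
      have := hanti (mem_Iic.2 hle) self_mem_Iic hle
      rwa [h0] at this
  simp only [hh] at key
  linarith

/-! ### Sums of products over `Bool`-cubes -/

lemma prodsum {n : ℕ} {R : Type*} [CommSemiring R] (g : Fin n → Bool → R) :
    ∑ s : Fin n → Bool, ∏ i, g i (s i) = ∏ i, (g i false + g i true) := by
  have := Finset.prod_univ_sum (fun _ : Fin n => (Finset.univ : Finset Bool)) (fun i b => g i b)
  rw [Fintype.piFinset_univ] at this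
  rw [← this]
  congr 1
  ext i
  simp [Fintype.sum_bool, add_comm]

lemma prod_single {n : ℕ} {j : Fin n} {h : Fin n → ℝ} {Z : ℝ} (hj : h j = Z)
    (ho : ∀ i, i ≠ j → h i = 1) : ∏ i, h i = Z := by
  rw [← hj]
  exact Finset.prod_eq_single j (fun i _ hi => ho i hi) (fun h => absurd (Finset.mem_univ j) h)

lemma prod_double {n : ℕ} {j k : Fin n} (hjk : j ≠ k) {h : Fin n → ℝ}
    (ho : ∀ i, i ≠ j → i ≠ k → h i = 1) : ∏ i, h i = h j * h k := by
  rw [← Finset.prod_pair hjk]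
  exact (Finset.prod_subset (Finset.subset_univ _)
    (fun x _ hx => by
      simp only [Finset.mem_insert, Finset.mem_singleton] at hx
      push_neg at hx
      exact ho x hx.1 hx.2)).symm

lemma sum_W {n : ℕ} (w : Fin n → Bool → ℝ) (hw1 : ∀ i, w i false + w i true = 1) :
    ∑ s : Fin n → Bool, ∏ i, w i (s i) = 1 := by
  rw [prodsum]
  exact Finset.prod_eq_one fun i _ => hw1 i

lemma sum_W_single {n : ℕ} (w u : Fin n → Bool → ℝ)
    (hmean : ∀ i, w i false * u i false + w i true * u i true = 0) (j : Fin n) :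
    ∑ s : Fin n → Bool, (∏ i, w i (s i)) * u j (s j) = 0 := by
  have key : ∀ s : Fin n → Bool, (∏ i, w i (s i)) * u j (s j)
      = ∏ i, (w i (s i) * (if i = j then u i (s i) else 1)) := by
    intro s
    rw [Finset.prod_mul_distrib]
    congr 1
    exact (Finset.prod_ite_eq' Finset.univ j (fun i => u i (s i))).symm ▸ by simp
  simp_rw [key]
  rw [prodsum (fun i b => w i b * (if i = j then u i b else 1))]
  refine Finset.prod_eq_zero (Finset.mem_univ j) ?_
  simp [hmean j]

lemma sum_W_cross {n : ℕ} (w u : Fin n → Bool → ℝ)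
    (hmean : ∀ i, w i false * u i false + w i true * u i true = 0)
    (j k : Fin n) (hjk : j ≠ k) :
    ∑ s : Fin n → Bool, (∏ i, w i (s i)) * (u j (s j) * u k (s k)) = 0 := by
  have key : ∀ s : Fin n → Bool, (∏ i, w i (s i)) * (u j (s j) * u k (s k))
      = ∏ i, (w i (s i) * (if i = j then u i (s i) else if i = k then u i (s i) else 1)) := by
    intro s
    rw [Finset.prod_mul_distrib]
    congr 1
    rw [prod_double hjk (h := fun i => if i = j then u i (s i) else if i = k then u i (s i) else 1)
      (fun i h1 h2 => by simp [h1, h2])]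
    simp [hjk, (by exact fun h => hjk h.symm : k ≠ j)]
  simp_rw [key]
  rw [prodsum (fun i b => w i b * (if i = j then u i b else if i = k then u i b else 1))]
  refine Finset.prod_eq_zero (Finset.mem_univ j) ?_
  simp [hmean j]

lemma sum_W_diag {n : ℕ} (w u : Fin n → Bool → ℝ) (hw1 : ∀ i, w i false + w i true = 1)
    (j : Fin n) :
    ∑ s : Fin n → Bool, (∏ i, w i (s i)) * (u j (s j))^2
      = w j false * (u j false)^2 + w j true * (u j true)^2 := by
  have key : ∀ s : Fin n → Bool, (∏ i, w i (s i)) * (u j (s j))^2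
      = ∏ i, (w i (s i) * (if i = j then (u i (s i))^2 else 1)) := by
    intro s
    rw [Finset.prod_mul_distrib]
    congr 1
    exact (Finset.prod_ite_eq' Finset.univ j (fun i => (u i (s i))^2)).symm ▸ by simp
  simp_rw [key]
  rw [prodsum (fun i b => w i b * (if i = j then (u i b)^2 else 1))]
  refine prod_single (j := j) (by simp) (fun i hi => by simp [hi, hw1 i])

/-! ### The key analytic bound -/

lemma key_bound {n : ℕ} (w u : Fin n → Bool → ℝ)
    (hw0 : ∀ i b, 0 ≤ w i b)
    (hw1 : ∀ i, w i false + w i true = 1)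
    (hmean : ∀ i, w i false * u i false + w i true * u i true = 0)
    (V : ℝ)
    (hvar : ∀ j, w j false * (u j false)^2 + w j true * (u j true)^2 ≤ V)
    (θc : Fin n → ℝ) (hθ : ∑ j, (θc j)^2 = 1) (A r : ℝ) :
    gphi A - r^2 * V / 2
      ≤ ∑ s : Fin n → Bool, (∏ i, w i (s i)) * gphi (A + r * ∑ j, θc j * u j (s j)) := by
  set W : (Fin n → Bool) → ℝ := fun s => ∏ i, w i (s i) with hW
  set L : (Fin n → Bool) → ℝ := fun s => ∑ j, θc j * u j (s j) with hL
  have hWnn : ∀ s, 0 ≤ W s := fun s => Finset.prod_nonneg fun i _ => hw0 i (s i)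
  have hSW : ∑ s : Fin n → Bool, W s = 1 := sum_W w hw1
  have hSL : ∑ s : Fin n → Bool, W s * L s = 0 := by
    have step : ∀ s, W s * L s = ∑ j, θc j * (W s * u j (s j)) := fun s => by
      rw [hL, Finset.mul_sum]
      exact Finset.sum_congr rfl fun j _ => by ring
    rw [Finset.sum_congr rfl (fun s _ => step s), Finset.sum_comm]
    refine Finset.sum_eq_zero fun j _ => ?_
    rw [← Finset.mul_sum, sum_W_single w u hmean j, mul_zero]
  have hSL2 : ∑ s : Fin n → Bool, W s * (L s)^2 ≤ V := by
    have step : ∀ s, W s * (L s)^2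
        = ∑ j, ∑ k, (θc j * θc k) * (W s * (u j (s j) * u k (s k))) := by
      intro s
      rw [hL, sq, Finset.sum_mul_sum]
      rw [Finset.mul_sum]
      refine Finset.sum_congr rfl fun j _ => ?_
      rw [Finset.mul_sum]
      exact Finset.sum_congr rfl fun k _ => by ring
    rw [Finset.sum_congr rfl (fun s _ => step s), Finset.sum_comm]
    have inner : ∀ j : Fin n,
        (∑ s : Fin n → Bool, ∑ k, (θc j * θc k) * (W s * (u j (s j) * u k (s k))))
        = (θc j)^2 * (w j false * (u j false)^2 + w j true * (u j true)^2) := by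
      intro j
      rw [Finset.sum_comm]
      rw [Finset.sum_eq_single j]
      · rw [← Finset.mul_sum]
        have : ∀ s, W s * (u j (s j) * u j (s j)) = W s * (u j (s j))^2 := fun s => by ring
        rw [Finset.sum_congr rfl fun s _ => this s, sum_W_diag w u hw1 j]
        ring
      · intro k _ hkj
        rw [← Finset.mul_sum, sum_W_cross w u hmean j k (Ne.symm hkj), mul_zero]
      · intro h
        exact absurd (Finset.mem_univ j) h
    rw [Finset.sum_congr rfl fun j _ => inner j]
    calc ∑ j, (θc j)^2 * (w j false * (u j false)^2 + w j true * (u j true)^2)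
        ≤ ∑ j, (θc j)^2 * V := Finset.sum_le_sum fun j _ =>
          mul_le_mul_of_nonneg_left (hvar j) (sq_nonneg _)
      _ = V := by rw [← Finset.sum_mul, hθ, one_mul]
  have taylor : ∀ s : Fin n → Bool,
      W s * (gphi A - A * gphi A * (r * L s) - (r * L s)^2/2) ≤ W s * gphi (A + r * L s) :=
    fun s => mul_le_mul_of_nonneg_left (gphi_taylor A (r * L s)) (hWnn s)
  calc gphi A - r^2 * V / 2
      ≤ gphi A * 1 - (A * gphi A * r) * 0 - (r^2/2) * (∑ s : Fin n → Bool, W s * (L s)^2) := by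
        have : (r^2/2) * (∑ s : Fin n → Bool, W s * (L s)^2) ≤ r^2/2 * V :=
          mul_le_mul_of_nonneg_left hSL2 (by positivity)
        linarith
    _ = ∑ s : Fin n → Bool, W s * (gphi A - A * gphi A * (r * L s) - (r * L s)^2/2) := by
        rw [← hSW, ← hSL]
        rw [Finset.mul_sum, Finset.mul_sum, Finset.mul_sum, ← Finset.sum_sub_distrib,
          ← Finset.sum_sub_distrib]
        exact Finset.sum_congr rfl fun s _ => by ring
    _ ≤ ∑ s : Fin n → Bool, W s * gphi (A + r * L s) := Finset.sum_le_sum fun s _ => taylor s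

/-! ### Measure-theoretic preliminaries -/

lemma twopoint_finite (c d : ℝ) (a b : ℝ) :
    IsFiniteMeasure (ENNReal.ofReal c • Measure.dirac a + ENNReal.ofReal d • Measure.dirac b) := by
  constructor
  simp [Measure.add_apply]

instance roundCoord_finite (s x : ℝ) : IsFiniteMeasure (roundCoord s x) :=
  twopoint_finite _ _ _ _

open scoped ENNReal in
lemma pi_two_point {n : ℕ} (w : Fin n → Bool → ℝ) (hw0 : ∀ i b, 0 ≤ w i b)
    (pt : Fin n → Bool → ℝ) :
    (Measure.pi fun i => ENNReal.ofReal (w i false) • Measure.dirac (pt i false)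
        + ENNReal.ofReal (w i true) • Measure.dirac (pt i true))
      = ∑ s : Fin n → Bool,
          ENNReal.ofReal (∏ i, w i (s i)) • Measure.dirac (fun i => pt i (s i)) := by
  haveI : ∀ i : Fin n, IsFiniteMeasure (ENNReal.ofReal (w i false) • Measure.dirac (pt i false)
        + ENNReal.ofReal (w i true) • Measure.dirac (pt i true)) :=
    fun i => twopoint_finite _ _ _ _
  refine Measure.pi_eq fun A hA => ?_
  have hbox : MeasurableSet (Set.pi univ A) := MeasurableSet.univ_pi hA
  rw [Measure.finset_sum_apply]
  have hterm : ∀ s : Fin n → Bool,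
      (ENNReal.ofReal (∏ i, w i (s i)) • Measure.dirac (fun i => pt i (s i))) (Set.pi univ A)
        = ∏ i, (ENNReal.ofReal (w i (s i)) * (A i).indicator (1 : ℝ → ℝ≥0∞) (pt i (s i))) := by
    intro s
    rw [Measure.smul_apply, smul_eq_mul, Measure.dirac_apply' _ hbox,
      ENNReal.ofReal_prod_of_nonneg (fun i _ => hw0 i (s i)), Finset.prod_mul_distrib]
    congr 1
    by_cases hmem : (fun i => pt i (s i)) ∈ univ.pi A
    · rw [Set.indicator_of_mem hmem]
      rw [Set.mem_univ_pi] at hmem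
      simp [Set.indicator_of_mem (hmem _)]
    · rw [Set.indicator_of_notMem hmem]
      rw [Set.mem_univ_pi] at hmem; push_neg at hmem
      obtain ⟨i, hi⟩ := hmem
      exact (Finset.prod_eq_zero (Finset.mem_univ i) (by simp [Set.indicator_of_notMem hi])).symm
  simp_rw [hterm]
  rw [prodsum (fun i b => ENNReal.ofReal (w i b) * (A i).indicator (1 : ℝ → ℝ≥0∞) (pt i b))]
  congr 1
  ext i
  rw [Measure.add_apply, Measure.smul_apply, Measure.smul_apply, smul_eq_mul, smul_eq_mul,
    Measure.dirac_apply' _ (hA i), Measure.dirac_apply' _ (hA i)]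

lemma integrable_dirac' {α : Type*} [MeasurableSpace α] [MeasurableSingletonClass α]
    (f : α → ℝ) (hf : StronglyMeasurable f) (a : α) : Integrable f (Measure.dirac a) := by
  refine ⟨hf.aestronglyMeasurable, ?_⟩
  rw [HasFiniteIntegral, lintegral_dirac]
  exact ENNReal.coe_lt_top

lemma integral_sum_two_point {n : ℕ} (W : (Fin n → Bool) → ℝ) (hW : ∀ s, 0 ≤ W s)
    (p : (Fin n → Bool) → (Fin n → ℝ)) (f : (Fin n → ℝ) → ℝ) (hf : StronglyMeasurable f) :
    ∫ x, f x ∂(∑ s : Fin n → Bool, ENNReal.ofReal (W s) • Measure.dirac (p s))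
      = ∑ s : Fin n → Bool, W s * f (p s) := by
  rw [integral_finset_sum_measure (fun s _ =>
    (integrable_dirac' f hf (p s)).smul_measure ENNReal.ofReal_ne_top)]
  refine Finset.sum_congr rfl fun s _ => ?_
  rw [integral_smul_measure, integral_dirac' f _ hf, smul_eq_mul,
    ENNReal.toReal_ofReal (hW s)]

/-! ### Coordinate formulas -/

lemma Ffun_eq {n N : ℕ} (r t : ℝ) (θ : Fin N → sphere (0 : EuclideanSpace ℝ (Fin n)) 1)
    (η : EuclideanSpace ℝ (Fin n)) :
    Ffun r t θ η = (1 / (N : ℝ)) * ∑ k : Fin N,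
      gphi (r * (∑ i, η i * (θ k : EuclideanSpace ℝ (Fin n)) i) + t) := by
  unfold Ffun
  simp [PiLp.inner_apply, RCLike.inner_apply, mul_comm]

lemma sphere_coords_sq {n : ℕ} (x : EuclideanSpace ℝ (Fin n)) (hx : ‖x‖ = 1) :
    ∑ i, (x i)^2 = 1 := by
  have h := hx
  rw [EuclideanSpace.norm_eq] at h
  simpa [Real.norm_eq_abs, sq_abs] using Real.sqrt_eq_one.mp h

/-! ### The main estimate -/

lemma main_est {n N : ℕ} (hn : 0 < n) (r t ρ : ℝ) (hρ : 0 < ρ)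
    (θ : Fin N → sphere (0 : EuclideanSpace ℝ (Fin n)) 1)
    (ξ : EuclideanSpace ℝ (Fin n)) :
    Ffun r t θ ξ ≤ (∫ η, Ffun r t θ η ∂(roundingLaw n ρ ξ)) + r^2 * ρ^2 / (8 * n) := by
  classical
  set sg : ℝ := ρ / Real.sqrt n with hsg
  have hsgpos : 0 < sg := div_pos hρ (Real.sqrt_pos.2 (by exact_mod_cast hn))
  set w : Fin n → Bool → ℝ := fun i b =>
    if b then Int.fract (ξ i / sg) else 1 - Int.fract (ξ i / sg) with hwdef
  set pt : Fin n → Bool → ℝ := fun i b =>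
    if b then sg * ((⌊ξ i / sg⌋ : ℝ) + 1) else sg * (⌊ξ i / sg⌋ : ℝ) with hptdef
  set u : Fin n → Bool → ℝ := fun i b => pt i b - ξ i with hudef
  have hxi : ∀ i, sg * ((⌊ξ i / sg⌋ : ℝ) + Int.fract (ξ i / sg)) = ξ i := by
    intro i
    rw [Int.floor_add_fract]
    field_simp
  have hw0 : ∀ i b, 0 ≤ w i b := by
    intro i b
    cases b
    · simp only [hwdef, Bool.false_eq_true, if_false]
      linarith [Int.fract_lt_one (ξ i / sg)]
    · simp only [hwdef, if_true]
      exact Int.fract_nonneg _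
  have hw1 : ∀ i, w i false + w i true = 1 := by
    intro i; simp [hwdef]
  have hmean : ∀ i, w i false * u i false + w i true * u i true = 0 := by
    intro i
    have := hxi i
    simp only [hwdef, hudef, hptdef, if_true, if_false, Bool.false_eq_true]
    nlinarith [this]
  have hvar : ∀ j, w j false * (u j false)^2 + w j true * (u j true)^2 ≤ sg^2 / 4 := by
    intro j
    have hx := hxi j
    have h0 := Int.fract_nonneg (ξ j / sg)
    have h1 := Int.fract_lt_one (ξ j / sg)
    simp only [hwdef, hudef, hptdef, if_true, if_false, Bool.false_eq_true]
    nlinarith [sq_nonneg sg, sq_nonneg (1 - 2 * Int.fract (ξ j / sg)),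
      sq_nonneg (sg * (1 - 2 * Int.fract (ξ j / sg)))]
  -- identify the product measure
  have hcomp : ∀ i, roundCoord sg (ξ i)
      = ENNReal.ofReal (w i false) • Measure.dirac (pt i false)
        + ENNReal.ofReal (w i true) • Measure.dirac (pt i true) := by
    intro i
    simp [roundCoord, hwdef, hptdef]
  have hpi : (Measure.pi fun i => roundCoord sg (ξ i))
      = ∑ s : Fin n → Bool,
          ENNReal.ofReal (∏ i, w i (s i)) • Measure.dirac (fun i => pt i (s i)) := by
    rw [show (fun i => roundCoord sg (ξ i))
      = fun i => ENNReal.ofReal (w i false) • Measure.dirac (pt i false)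
        + ENNReal.ofReal (w i true) • Measure.dirac (pt i true) from funext hcomp]
    exact pi_two_point w hw0 pt
  -- compute the integral
  set f : (Fin n → ℝ) → ℝ := fun x =>
    (1 / (N : ℝ)) * ∑ k : Fin N, gphi (r * (∑ i, x i * (θ k : EuclideanSpace ℝ (Fin n)) i) + t)
    with hfdef
  have hfmeas : StronglyMeasurable f := by
    refine Continuous.stronglyMeasurable ?_
    unfold f
    unfold gphi
    fun_prop
  have hFful : ∀ x : Fin n → ℝ,
      Ffun r t θ ((MeasurableEquiv.toLp 2 (Fin n → ℝ)) x) = f x := by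
    intro x
    rw [Ffun_eq]
    rfl
  have hint : (∫ η, Ffun r t θ η ∂(roundingLaw n ρ ξ))
      = ∑ s : Fin n → Bool, (∏ i, w i (s i)) * f (fun i => pt i (s i)) := by
    rw [roundingLaw, ← hsg, integral_map_equiv]
    simp_rw [hFful]
    rw [hpi, integral_sum_two_point _ (fun s => Finset.prod_nonneg fun i _ => hw0 i (s i)) _ _ hfmeas]
  rw [hint, Ffun_eq]
  -- reduce to the per-`k` bound
  have hswap : ∑ s : Fin n → Bool, (∏ i, w i (s i)) * f (fun i => pt i (s i))
      = (1 / (N : ℝ)) * ∑ k : Fin N, ∑ s : Fin n → Bool,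
          (∏ i, w i (s i)) * gphi (r * (∑ i, pt i (s i) * (θ k : EuclideanSpace ℝ (Fin n)) i) + t) := by
    simp only [hfdef, Finset.mul_sum]
    rw [Finset.sum_comm]
    exact Finset.sum_congr rfl fun k _ => Finset.sum_congr rfl fun s _ => by ring
  rw [hswap]
  have perk : ∀ k : Fin N,
      gphi (r * (∑ i, ξ i * (θ k : EuclideanSpace ℝ (Fin n)) i) + t)
        ≤ (∑ s : Fin n → Bool, (∏ i, w i (s i)) *
            gphi (r * (∑ i, pt i (s i) * (θ k : EuclideanSpace ℝ (Fin n)) i) + t))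
          + r^2 * ρ^2 / (8 * n) := by
    intro k
    set θc : Fin n → ℝ := fun i => (θ k : EuclideanSpace ℝ (Fin n)) i with hθc
    have hθnorm : ‖(θ k : EuclideanSpace ℝ (Fin n))‖ = 1 := by
      have := (θ k).2
      rwa [mem_sphere_zero_iff_norm] at this
    have hθ : ∑ j, (θc j)^2 = 1 := sphere_coords_sq _ hθnorm
    set A : ℝ := r * (∑ i, ξ i * θc i) + t with hA
    have harg : ∀ s : Fin n → Bool,
        r * (∑ i, pt i (s i) * θc i) + t = A + r * ∑ j, θc j * u j (s j) := by
      intro s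
      have : ∑ j, θc j * u j (s j) = (∑ i, pt i (s i) * θc i) - ∑ i, ξ i * θc i := by
        rw [← Finset.sum_sub_distrib]
        exact Finset.sum_congr rfl fun j _ => by simp [hudef]; ring
      rw [this, hA]; ring
    have hkb := key_bound w u hw0 hw1 hmean (sg^2/4) hvar θc hθ A r
    have herr : r^2 * (sg^2/4) / 2 = r^2 * ρ^2 / (8 * n) := by
      have hn0 : (n:ℝ) ≠ 0 := ne_of_gt (by exact_mod_cast hn)
      have hsqn : sg^2 = ρ^2 / n := by
        rw [hsg, div_pow, Real.sq_sqrt (by positivity : (0:ℝ) ≤ (n:ℝ))]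
      rw [hsqn]
      ring
    calc gphi A ≤ (∑ s : Fin n → Bool, (∏ i, w i (s i)) * gphi (A + r * ∑ j, θc j * u j (s j)))
          + r^2 * (sg^2/4) / 2 := by linarith
      _ = (∑ s : Fin n → Bool, (∏ i, w i (s i)) *
            gphi (r * (∑ i, pt i (s i) * θc i) + t)) + r^2 * ρ^2 / (8 * n) := by
          rw [herr]
          exact congrArg (fun z => z + r^2*ρ^2/(8*(n:ℝ)))
            (Finset.sum_congr rfl fun s _ => by rw [harg s])
  -- sum the per-`k` bounds
  by_cases hN : N = 0
  · subst hN
    simp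
    positivity
  have hNpos : (0:ℝ) < N := by exact_mod_cast Nat.pos_of_ne_zero hN
  have hsum := Finset.sum_le_sum (fun k (_ : k ∈ Finset.univ) => perk k)
  have hcard : ∑ _k : Fin N, r^2 * ρ^2 / (8 * n) = N * (r^2 * ρ^2 / (8 * n)) := by
    rw [Finset.sum_const, Finset.card_univ, Fintype.card_fin, nsmul_eq_mul]
  rw [Finset.sum_add_distrib, hcard] at hsum
  have := mul_le_mul_of_nonneg_left hsum (by positivity : (0:ℝ) ≤ 1 / (N:ℝ))
  calc (1 / (N : ℝ)) * ∑ k : Fin N, gphi (r * (∑ i, ξ i * (θ k : EuclideanSpace ℝ (Fin n)) i) + t)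
      ≤ (1 / (N : ℝ)) * ((∑ k : Fin N, ∑ s : Fin n → Bool, (∏ i, w i (s i)) *
          gphi (r * (∑ i, pt i (s i) * (θ k : EuclideanSpace ℝ (Fin n)) i) + t))
          + N * (r^2 * ρ^2 / (8 * n))) := this
    _ = (1 / (N : ℝ)) * (∑ k : Fin N, ∑ s : Fin n → Bool, (∏ i, w i (s i)) *
          gphi (r * (∑ i, pt i (s i) * (θ k : EuclideanSpace ℝ (Fin n)) i) + t))
          + r^2 * ρ^2 / (8 * n) := by
        field_simp

/-- for `ρ ≤ min(1/2, c√n/(rM))`, any fixed points `θ₁,…,θ_N` on the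
sphere, and any unit vector `ξ`: `F(ξ,t) ≤ 𝔼_η F(η^ξ,t) + C/M`. -/
theorem Ffun_le_expectation_rounding :
    ∃ C c : ℝ, 0 < C ∧ 0 < c ∧
      ∀ n N : ℕ, 0 < n → 0 < N → ∀ M r : ℝ, 0 < M → 0 < r →
        ∀ ρ : ℝ, 0 < ρ → ρ ≤ min (1 / 2) (c * Real.sqrt n / (r * M)) →
          ∀ θ : Fin N → sphere (0 : EuclideanSpace ℝ (Fin n)) 1,
            ∀ ξ : EuclideanSpace ℝ (Fin n), ‖ξ‖ = 1 → ∀ t : ℝ,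
              Ffun r t θ ξ ≤ (∫ η, Ffun r t θ η ∂(roundingLaw n ρ ξ)) + C / M := by
  refine ⟨1, 1, one_pos, one_pos, ?_⟩
  intro n N hn hN M r hM hr ρ hρ hρle θ ξ hξ t
  have hmain := main_est hn r t ρ hρ θ ξ
  have hρ2 : ρ ≤ 1 * Real.sqrt n / (r * M) := le_trans hρle (min_le_right _ _)
  have hsq : Real.sqrt n ^ 2 = (n:ℝ) := Real.sq_sqrt (by positivity)
  have hnpos : (0:ℝ) < n := by exact_mod_cast hn
  rcases le_or_gt M 1 with hM1 | hM1
  · -- trivial case: F ≤ 1 ≤ 1/M and ∫ ≥ 0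
    have hF1 : Ffun r t θ ξ ≤ 1 := by
      rw [Ffun]
      have : ∑ k : Fin N, gphi (r * ⟪ξ, (θ k : EuclideanSpace ℝ (Fin n))⟫ + t)
          ≤ ∑ _k : Fin N, (1:ℝ) := Finset.sum_le_sum fun k _ => gphi_le_one _
      rw [Finset.sum_const, Finset.card_univ, Fintype.card_fin, nsmul_eq_mul, mul_one] at this
      calc (1 / (N : ℝ)) * ∑ k : Fin N, gphi (r * ⟪ξ, (θ k : EuclideanSpace ℝ (Fin n))⟫ + t)
          ≤ (1 / (N : ℝ)) * N := by
            refine mul_le_mul_of_nonneg_left this (by positivity)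
        _ ≤ 1 := by
            rw [one_div, inv_mul_cancel₀ (by exact_mod_cast hN.ne' : (N:ℝ) ≠ 0)]
    have hintnn : 0 ≤ ∫ η, Ffun r t θ η ∂(roundingLaw n ρ ξ) := by
      refine integral_nonneg fun η => ?_
      rw [Ffun]
      exact mul_nonneg (by positivity)
        (Finset.sum_nonneg fun k _ => (gphi_pos _).le)
    have : (1:ℝ) ≤ 1 / M := by
      rw [le_div_iff₀ hM]; linarith
    linarith
  · -- main case: M > 1
    have hrρ : r * ρ ≤ Real.sqrt n / M := by
      rw [one_mul] at hρ2
      calc r * ρ ≤ r * (Real.sqrt n / (r * M)) :=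
            mul_le_mul_of_nonneg_left hρ2 hr.le
        _ = Real.sqrt n / M := by field_simp
    have herr : r^2 * ρ^2 / (8 * n) ≤ 1 / M := by
      have h1 : (r * ρ)^2 ≤ (Real.sqrt n / M)^2 := by
        have := mul_self_le_mul_self (by positivity : (0:ℝ) ≤ r * ρ) hrρ
        simpa [sq] using this
      have h2 : (Real.sqrt n / M)^2 = n / M^2 := by
        rw [div_pow, hsq]
      rw [h2] at h1
      have h3 : r^2 * ρ^2 ≤ n / M^2 := by
        calc r^2 * ρ^2 = (r * ρ)^2 := by ring
          _ ≤ n / M^2 := h1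
      have h4 : r^2 * ρ^2 / (8 * n) ≤ (n / M^2) / (8 * n) := by
        exact div_le_div_of_nonneg_right h3 (by positivity) |>.trans_eq rfl
      calc r^2 * ρ^2 / (8 * n) ≤ (n / M^2) / (8 * n) := h4
        _ = 1 / (8 * M^2) := by field_simp
        _ ≤ 1 / M := by
            rw [div_le_div_iff₀ (by positivity) hM]
            nlinarith
    linarith
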